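/- Let I be an inverse sequence of abelian groups over ω that is an injective object in the category Ab^{ω^op} of inverse sequences of abelian groups. Suppose some x ∈ I_n is not in the image of the bonding map p_n : I_{n+1} → I_n. Then one obtains a contradiction; i.e., if I is injective in Ab^{ω^op}, then every bonding map p_n : I_{n+1} → I_n is surjective. -/
import Mathlib


universe u

/-- An inverse sequence of abelian groups `⟨I k, p k⟩` over `ω` is an injective object
in the category `Ab^{ω^op}` of inverse sequences of abelian groups: for every
levelwise-injective morphism `ψ : G → H` of inverse sequences and every morphism
`φ : G → I`, there is a morphism `φ̄ : H → I` with `φ̄ ∘ ψ = φ`. -/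
def IsInjectiveSeq {I : ℕ → Type u} [∀ k, AddCommGroup (I k)]
    (p : ∀ k, I (k + 1) →+ I k) : Prop :=
  ∀ (G H : ℕ → Type u) (_ : ∀ k, AddCommGroup (G k)) (_ : ∀ k, AddCommGroup (H k))
    (q : ∀ k, G (k + 1) →+ G k) (r : ∀ k, H (k + 1) →+ H k)
    (ψ : ∀ k, G k →+ H k) (φ : ∀ k, G k →+ I k),
    (∀ k, (r k).comp (ψ (k + 1)) = (ψ k).comp (q k)) →
    (∀ k, (p k).comp (φ (k + 1)) = (φ k).comp (q k)) →
    (∀ k, Function.Injective (ψ k)) →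
    ∃ φb : ∀ k, H k →+ I k,
      (∀ k, (p k).comp (φb (k + 1)) = (φb k).comp (r k)) ∧
      (∀ k, (φb k).comp (ψ k) = φ k)

/-- If an inverse sequence of abelian groups is an injective object in `Ab^{ω^op}`,
then every bonding map is surjective. -/
theorem bonding_surjective_of_injectiveSeq
    {I : ℕ → Type u} [∀ k, AddCommGroup (I k)] (p : ∀ k, I (k + 1) →+ I k)
    (hinj : IsInjectiveSeq p) : ∀ k, Function.Surjective (p k) := by
  intro n x
  -- the element inserted at level n, zero elsewhere
  set c : ∀ k, I k := fun k => if h : k = n then h ▸ x else 0 with hc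
  -- multiplier for the second component: keep ℤ above level n, kill it at ≤ n
  set e : ℕ → ℤ := fun k => if n < k then 1 else 0 with he
  have hcn : c n = x := by simp [hc]
  have hen : e n = 0 := by simp [he]
  -- the bigger sequence H k = I k × ℤ
  let r : ∀ k, (I (k + 1) × ULift.{u} ℤ) →+ (I k × ULift.{u} ℤ) := fun k =>
    { toFun := fun a => (p k a.1 + a.2.down • c k, ULift.up (e k * a.2.down))
      map_zero' := by simp [Prod.ext_iff, ULift.ext_iff]
      map_add' := by
        intro a b
        simp [Prod.ext_iff, ULift.ext_iff, add_smul, mul_add]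
        abel }
  let ψ : ∀ k, I k →+ (I k × ULift.{u} ℤ) := fun k =>
    AddMonoidHom.prod (AddMonoidHom.id _) 0
  obtain ⟨φb, hcomm, hext⟩ :=
    hinj I (fun k => I k × ULift.{u} ℤ) _ _ p r ψ (fun k => AddMonoidHom.id _)
      (by
        intro k
        ext a
        · simp [r, ψ]
        · simp [r, ψ])
      (by intro k; ext a; rfl)
      (by
        intro k a b h
        exact congrArg Prod.fst h)
  refine ⟨φb (n + 1) (0, ULift.up 1), ?_⟩
  have h1 : p n (φb (n + 1) (0, ULift.up 1)) = φb n (r n (0, ULift.up 1)) :=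
    DFunLike.congr_fun (hcomm n) (0, ULift.up 1)
  have h2 : r n ((0 : I (n + 1)), ULift.up 1) = (x, 0) := by
    simp [r, hcn, hen, Prod.ext_iff, ULift.ext_iff]
  have h3 : φb n (x, 0) = x := by
    have := DFunLike.congr_fun (hext n) x
    simpa [ψ] using this
  rw [h1, h2, h3]
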